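/- (Zero-one law for the trace of simple symmetric renormalization maps) Let M be a measurable space, ℓ ≥ 0 an integer, and φ : M^{2ℓ+1} → M a measurable map. Let T : M^ℤ → M^ℤ be the simple renormalization map with local rule φ, i.e., T(a)_k = φ(a_{(2ℓ+1)k−ℓ}, …, a_{(2ℓ+1)k+ℓ}) for all a ∈ M^ℤ and k ∈ ℤ. Suppose φ has a positional symmetry (a permutation π of {1,…,2ℓ+1} with φ(a_{π(1)},…,a_{π(2ℓ+1)}) = φ(a_1,…,a_{2ℓ+1}) for all a_i ∈ M) that moves its central argument, i.e., π(ℓ+1) ≠ ℓ+1. Let X = (X_k)_{k∈ℤ} be a sequence of i.i.d. M-valued random variables and let X^T := (T^n(X)_0)_{n∈ℕ₀} be the trace of X under T. Then for every tail event E ⊆ M^{ℕ₀} (a measurable event not depending on any finite number of coordinates), one has P(X^T ∈ E) ∈ {0, 1}. -/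

import Mathlib

open MeasureTheory ProbabilityTheory

namespace RenormZeroOne

variable {M : Type*}

/-- half-width of the dependence block of `T^[n] · 0`. -/
def halfL (ℓ : ℕ) : ℕ → ℕ
  | 0 => 0
  | n+1 => (2*ℓ+1) * halfL ℓ n + ℓ

lemma pow_eq (ℓ n : ℕ) : (2*ℓ+1)^n = 2 * halfL ℓ n + 1 := by
  induction n with
  | zero => simp [halfL]
  | succ n ih => rw [pow_succ, ih, halfL]; ring

section Det

variable {ℓ : ℕ} {φ : (Fin (2*ℓ+1) → M) → M} {T : (ℤ → M) → (ℤ → M)}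
  (hT : ∀ (a : ℤ → M) (k : ℤ),
      T a k = φ (fun i => a (((2 * ℓ + 1 : ℕ) : ℤ) * k - (ℓ : ℤ) + ((i : ℕ) : ℤ))))

include hT

/-- Locality: `T^[n] a k` only depends on `a` on the block of half-width `halfL ℓ n`
centered at `(2ℓ+1)^n k`. -/
lemma loc (n : ℕ) (a a' : ℤ → M) (k : ℤ)
    (h : ∀ m : ℤ, ((2*ℓ+1:ℕ):ℤ)^n * k - (halfL ℓ n : ℤ) ≤ m →
      m ≤ ((2*ℓ+1:ℕ):ℤ)^n * k + (halfL ℓ n : ℤ) → a m = a' m) :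
    T^[n] a k = T^[n] a' k := by
  induction n generalizing a a' k with
  | zero => simpa using h k (by simp [halfL]) (by simp [halfL])
  | succ n ih =>
    rw [Function.iterate_succ_apply, Function.iterate_succ_apply]
    apply ih
    intro m hm1 hm2
    rw [hT, hT]
    congr 1; funext i
    have hLs : ((halfL ℓ (n+1) : ℕ) : ℤ) = (2*(ℓ:ℤ)+1) * (halfL ℓ n : ℤ) + ℓ := by
      show ((((2*ℓ+1) * halfL ℓ n + ℓ : ℕ)) : ℤ) = _
      push_cast; ring
    have hi0 : (0:ℤ) ≤ ((i:ℕ):ℤ) := by positivity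
    have hi1 : ((i:ℕ):ℤ) ≤ 2*(ℓ:ℤ) := by
      have := i.isLt; omega
    have h1 : (2*(ℓ:ℤ)+1) * (((2*ℓ+1:ℕ):ℤ)^n * k - (halfL ℓ n : ℤ)) ≤ (2*(ℓ:ℤ)+1) * m :=
      mul_le_mul_of_nonneg_left hm1 (by positivity)
    have h2 : (2*(ℓ:ℤ)+1) * m ≤ (2*(ℓ:ℤ)+1) * (((2*ℓ+1:ℕ):ℤ)^n * k + (halfL ℓ n : ℤ)) :=
      mul_le_mul_of_nonneg_left hm2 (by positivity)
    push_cast at h1 h2 ⊢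
    apply h <;> · rw [hLs, pow_succ] <;> push_cast <;> nlinarith [h1, h2]

/-- `T` intertwines the shift by `(2ℓ+1)j` with the shift by `j`. -/
lemma shiftT_def (a : ℤ → M) (j k : ℤ) :
    T (fun m => a (m + ((2*ℓ+1:ℕ):ℤ) * j)) k = T a (k + j) := by
  rw [hT, hT]
  congr 1; funext i; congr 1; ring

lemma shiftTiter_def (n : ℕ) (a : ℤ → M) (j k : ℤ) :
    T^[n] (fun m => a (m + ((2*ℓ+1:ℕ):ℤ)^n * j)) k = T^[n] a (k + j) := by
  induction n generalizing a k with
  | zero => simp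
  | succ n ih =>
    rw [Function.iterate_succ_apply, Function.iterate_succ_apply]
    have hstep : T (fun m => a (m + ((2*ℓ+1:ℕ):ℤ)^(n+1) * j))
        = fun k' => (T a) (k' + ((2*ℓ+1:ℕ):ℤ)^n * j) := by
      funext k'
      have h := shiftT_def hT a (((2*ℓ+1:ℕ):ℤ)^n * j) k'
      rw [← h]
      congr 1; funext m; congr 1; rw [pow_succ]; ring
    rw [hstep, ih]

end Det

section Swap

variable (ℓ N : ℕ) (π : Equiv.Perm (Fin (2*ℓ+1)))

/-- `π`, coded as a map on `ℤ` (acting on `[0, 2ℓ]`, identity elsewhere). -/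
def ppFun : ℤ → ℤ := fun q =>
  if h : 0 ≤ q ∧ q < ((2*ℓ+1:ℕ):ℤ) then ((π ⟨q.toNat, by omega⟩ : Fin (2*ℓ+1)) : ℕ) else q

lemma pp_mem {q : ℤ} (h0 : 0 ≤ q) (h1 : q < ((2*ℓ+1:ℕ):ℤ)) :
    0 ≤ ppFun ℓ π q ∧ ppFun ℓ π q < ((2*ℓ+1:ℕ):ℤ) := by
  rw [ppFun, dif_pos ⟨h0, h1⟩]
  have := (π ⟨q.toNat, by omega⟩).isLt
  omega

lemma pp_inj : Function.Injective (ppFun ℓ π) := by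
  intro q1 q2 h
  simp only [ppFun] at h
  by_cases h1 : 0 ≤ q1 ∧ q1 < ((2*ℓ+1:ℕ):ℤ) <;> by_cases h2 : 0 ≤ q2 ∧ q2 < ((2*ℓ+1:ℕ):ℤ)
  · rw [dif_pos h1, dif_pos h2] at h
    have heq : (π ⟨q1.toNat, by omega⟩) = (π ⟨q2.toNat, by omega⟩) := by
      apply Fin.ext; omega
    have := π.injective heq
    have : q1.toNat = q2.toNat := congrArg Fin.val this
    omega
  · exfalso; rw [dif_pos h1, dif_neg h2] at h
    have := (π ⟨q1.toNat, by omega⟩).isLt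
    omega
  · exfalso; rw [dif_neg h1, dif_pos h2] at h
    have := (π ⟨q2.toNat, by omega⟩).isLt
    omega
  · rwa [dif_neg h1, dif_neg h2] at h

lemma pp_fin (i : Fin (2*ℓ+1)) : ppFun ℓ π ((i:ℕ):ℤ) = ((π i : ℕ):ℤ) := by
  have hi := i.isLt
  rw [ppFun, dif_pos (by constructor <;> omega)]
  norm_num

lemma cast_pow_eq (n : ℕ) : ((2*ℓ+1:ℕ):ℤ)^n = 2 * (halfL ℓ n : ℤ) + 1 := by
  have h : (((2*ℓ+1)^n : ℕ) : ℤ) = ((2*ℓ+1:ℕ):ℤ)^n := by push_cast; ring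
  rw [← h, pow_eq]; push_cast; ring

lemma halfL_succ_cast :
    ((halfL ℓ (N+1) : ℕ) : ℤ) = (ℓ:ℤ) * ((2*ℓ+1:ℕ):ℤ)^N + (halfL ℓ N : ℤ) := by
  have h1 : halfL ℓ (N+1) = (2*ℓ+1) * halfL ℓ N + ℓ := rfl
  rw [h1, cast_pow_eq]
  push_cast
  ring

/-- The block swap at level `N`: inside the central block of half-width `halfL ℓ (N+1)`,
permute the `2ℓ+1` sub-blocks of width `(2ℓ+1)^N` according to `π`; identity outside. -/
def swapFun : ℤ → ℤ := fun m =>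
  if 0 ≤ m + (halfL ℓ (N+1) : ℤ) ∧ m + (halfL ℓ (N+1) : ℤ) < ((2*ℓ+1:ℕ):ℤ)^(N+1) then
    ppFun ℓ π ((m + (halfL ℓ (N+1) : ℤ)) / ((2*ℓ+1:ℕ):ℤ)^N) * ((2*ℓ+1:ℕ):ℤ)^N
      + (m + (halfL ℓ (N+1) : ℤ)) % ((2*ℓ+1:ℕ):ℤ)^N - (halfL ℓ (N+1) : ℤ)
  else m

lemma swap_pos_eq (m : ℤ)
    (h : 0 ≤ m + (halfL ℓ (N+1) : ℤ) ∧ m + (halfL ℓ (N+1) : ℤ) < ((2*ℓ+1:ℕ):ℤ)^(N+1)) :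
    swapFun ℓ N π m
      = ppFun ℓ π ((m + (halfL ℓ (N+1) : ℤ)) / ((2*ℓ+1:ℕ):ℤ)^N) * ((2*ℓ+1:ℕ):ℤ)^N
        + (m + (halfL ℓ (N+1) : ℤ)) % ((2*ℓ+1:ℕ):ℤ)^N - (halfL ℓ (N+1) : ℤ) :=
  if_pos h

lemma swap_neg_eq (m : ℤ)
    (h : ¬(0 ≤ m + (halfL ℓ (N+1) : ℤ) ∧ m + (halfL ℓ (N+1) : ℤ) < ((2*ℓ+1:ℕ):ℤ)^(N+1))) :
    swapFun ℓ N π m = m :=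
  if_neg h

/-- On the sub-block with index `k ∈ [-ℓ, ℓ]`, the swap is a translation by
`(π(k+ℓ) - (k+ℓ)) * (2ℓ+1)^N`. -/
lemma swap_block (k m : ℤ) (hk1 : -(ℓ:ℤ) ≤ k) (hk2 : k ≤ (ℓ:ℤ))
    (hm1 : ((2*ℓ+1:ℕ):ℤ)^N * k - (halfL ℓ N : ℤ) ≤ m)
    (hm2 : m ≤ ((2*ℓ+1:ℕ):ℤ)^N * k + (halfL ℓ N : ℤ)) :
    swapFun ℓ N π m
      = m + (ppFun ℓ π (k + ℓ) - (k + ℓ)) * ((2*ℓ+1:ℕ):ℤ)^N := by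
  have hs : ((2*ℓ+1:ℕ):ℤ)^N = 2 * (halfL ℓ N : ℤ) + 1 := cast_pow_eq ℓ N
  have hLo : ((halfL ℓ (N+1):ℕ):ℤ) = (ℓ:ℤ) * ((2*ℓ+1:ℕ):ℤ)^N + (halfL ℓ N : ℤ) :=
    halfL_succ_cast ℓ N
  have hsk : (k + (ℓ:ℤ)) * ((2*ℓ+1:ℕ):ℤ)^N
      = ((2*ℓ+1:ℕ):ℤ)^N * k + (ℓ:ℤ) * ((2*ℓ+1:ℕ):ℤ)^N := by ring
  have hkl0 : 0 ≤ k + (ℓ:ℤ) := by omega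
  have hr0 : 0 ≤ m + ((halfL ℓ (N+1):ℕ):ℤ) - (k + ℓ) * ((2*ℓ+1:ℕ):ℤ)^N := by omega
  have hr1 : m + ((halfL ℓ (N+1):ℕ):ℤ) - (k + ℓ) * ((2*ℓ+1:ℕ):ℤ)^N < ((2*ℓ+1:ℕ):ℤ)^N := by
    omega
  have hks : 0 ≤ (k + (ℓ:ℤ)) * ((2*ℓ+1:ℕ):ℤ)^N := mul_nonneg hkl0 (by positivity)
  have hks2 : (k + (ℓ:ℤ)) * ((2*ℓ+1:ℕ):ℤ)^N ≤ 2 * (ℓ:ℤ) * ((2*ℓ+1:ℕ):ℤ)^N := by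
    have := mul_le_mul_of_nonneg_right (show k + (ℓ:ℤ) ≤ 2*ℓ by omega)
      (show (0:ℤ) ≤ ((2*ℓ+1:ℕ):ℤ)^N by positivity)
    linarith
  have hBs : ((2*ℓ+1:ℕ):ℤ)^(N+1) = ((2*ℓ+1:ℕ):ℤ)^N * ((2*ℓ+1:ℕ):ℤ) := pow_succ _ _
  have hBB : ((2*ℓ+1:ℕ):ℤ)^N * ((2*ℓ+1:ℕ):ℤ) = 2*(ℓ:ℤ)*((2*ℓ+1:ℕ):ℤ)^N + ((2*ℓ+1:ℕ):ℤ)^N := by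
    push_cast; ring
  have hcond : 0 ≤ m + ((halfL ℓ (N+1):ℕ):ℤ)
      ∧ m + ((halfL ℓ (N+1):ℕ):ℤ) < ((2*ℓ+1:ℕ):ℤ)^(N+1) := by omega
  have hdiv : (m + ((halfL ℓ (N+1):ℕ):ℤ)) / ((2*ℓ+1:ℕ):ℤ)^N = k + ℓ := by
    have hrw : m + ((halfL ℓ (N+1):ℕ):ℤ)
        = (m + ((halfL ℓ (N+1):ℕ):ℤ) - (k+ℓ)*((2*ℓ+1:ℕ):ℤ)^N) + (k+ℓ)*((2*ℓ+1:ℕ):ℤ)^N := by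
      ring
    rw [hrw, Int.add_mul_ediv_right _ _ (show ((2*ℓ+1:ℕ):ℤ)^N ≠ 0 by positivity),
      Int.ediv_eq_zero_of_lt hr0 hr1, zero_add]
  have hmod : (m + ((halfL ℓ (N+1):ℕ):ℤ)) % ((2*ℓ+1:ℕ):ℤ)^N
      = m + ((halfL ℓ (N+1):ℕ):ℤ) - (k+ℓ)*((2*ℓ+1:ℕ):ℤ)^N := by
    conv_lhs => rw [show m + ((halfL ℓ (N+1):ℕ):ℤ)
        = (m + ((halfL ℓ (N+1):ℕ):ℤ) - (k+ℓ)*((2*ℓ+1:ℕ):ℤ)^N) + (k+ℓ)*((2*ℓ+1:ℕ):ℤ)^N from by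
      ring]
    rw [Int.add_mul_emod_self_right, Int.emod_eq_of_lt hr0 hr1]
  rw [swap_pos_eq ℓ N π m hcond, hdiv, hmod]
  ring

lemma swap_outside (m : ℤ)
    (h : m < -((halfL ℓ (N+1) : ℕ):ℤ) ∨ ((halfL ℓ (N+1) : ℕ):ℤ) < m) :
    swapFun ℓ N π m = m := by
  apply swap_neg_eq
  have := cast_pow_eq ℓ (N+1)
  omega

lemma swap_in_range (m : ℤ)
    (h0 : 0 ≤ m + ((halfL ℓ (N+1) : ℕ):ℤ))
    (h1 : m + ((halfL ℓ (N+1) : ℕ):ℤ) < ((2*ℓ+1:ℕ):ℤ)^(N+1)) :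
    0 ≤ swapFun ℓ N π m + ((halfL ℓ (N+1) : ℕ):ℤ) ∧
      swapFun ℓ N π m + ((halfL ℓ (N+1) : ℕ):ℤ) < ((2*ℓ+1:ℕ):ℤ)^(N+1) := by
  have hspos : (0:ℤ) < ((2*ℓ+1:ℕ):ℤ)^N := by positivity
  have hB : ((2*ℓ+1:ℕ):ℤ)^(N+1) = ((2*ℓ+1:ℕ):ℤ)^N * ((2*ℓ+1:ℕ):ℤ) := pow_succ _ _
  have hq0 : 0 ≤ (m + ((halfL ℓ (N+1):ℕ):ℤ)) / ((2*ℓ+1:ℕ):ℤ)^N := Int.ediv_nonneg h0 hspos.le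
  have hq1 : (m + ((halfL ℓ (N+1):ℕ):ℤ)) / ((2*ℓ+1:ℕ):ℤ)^N < ((2*ℓ+1:ℕ):ℤ) := by
    rw [Int.ediv_lt_iff_lt_mul hspos]
    calc m + ((halfL ℓ (N+1):ℕ):ℤ) < ((2*ℓ+1:ℕ):ℤ)^N * ((2*ℓ+1:ℕ):ℤ) := hB ▸ h1
    _ = ((2*ℓ+1:ℕ):ℤ) * ((2*ℓ+1:ℕ):ℤ)^N := by ring
  obtain ⟨hp0, hp1⟩ := pp_mem ℓ π hq0 hq1
  have hr0 : 0 ≤ (m + ((halfL ℓ (N+1):ℕ):ℤ)) % ((2*ℓ+1:ℕ):ℤ)^N :=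
    Int.emod_nonneg _ hspos.ne'
  have hr1 : (m + ((halfL ℓ (N+1):ℕ):ℤ)) % ((2*ℓ+1:ℕ):ℤ)^N < ((2*ℓ+1:ℕ):ℤ)^N :=
    Int.emod_lt_of_pos _ hspos
  rw [swap_pos_eq ℓ N π m ⟨h0, h1⟩]
  have h2 : ppFun ℓ π ((m + ((halfL ℓ (N+1):ℕ):ℤ))/((2*ℓ+1:ℕ):ℤ)^N) * ((2*ℓ+1:ℕ):ℤ)^N
      ≤ (((2*ℓ+1:ℕ):ℤ) - 1) * ((2*ℓ+1:ℕ):ℤ)^N :=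
    mul_le_mul_of_nonneg_right (by omega) hspos.le
  have h3 : 0 ≤ ppFun ℓ π ((m + ((halfL ℓ (N+1):ℕ):ℤ))/((2*ℓ+1:ℕ):ℤ)^N) * ((2*ℓ+1:ℕ):ℤ)^N :=
    mul_nonneg hp0 hspos.le
  have h4 : (((2*ℓ+1:ℕ):ℤ) - 1) * ((2*ℓ+1:ℕ):ℤ)^N
      = ((2*ℓ+1:ℕ):ℤ)^N * ((2*ℓ+1:ℕ):ℤ) - ((2*ℓ+1:ℕ):ℤ)^N := by ring
  omega

lemma swap_inj : Function.Injective (swapFun ℓ N π) := by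
  have hspos : (0:ℤ) < ((2*ℓ+1:ℕ):ℤ)^N := by positivity
  have hqr : ∀ m : ℤ, (0 ≤ m + ((halfL ℓ (N+1):ℕ):ℤ)
        ∧ m + ((halfL ℓ (N+1):ℕ):ℤ) < ((2*ℓ+1:ℕ):ℤ)^(N+1)) →
      (swapFun ℓ N π m + ((halfL ℓ (N+1):ℕ):ℤ)) / ((2*ℓ+1:ℕ):ℤ)^N
          = ppFun ℓ π ((m + ((halfL ℓ (N+1):ℕ):ℤ))/((2*ℓ+1:ℕ):ℤ)^N) ∧
        (swapFun ℓ N π m + ((halfL ℓ (N+1):ℕ):ℤ)) % ((2*ℓ+1:ℕ):ℤ)^N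
          = (m + ((halfL ℓ (N+1):ℕ):ℤ)) % ((2*ℓ+1:ℕ):ℤ)^N := by
    intro m hm
    have hr0 : 0 ≤ (m + ((halfL ℓ (N+1):ℕ):ℤ)) % ((2*ℓ+1:ℕ):ℤ)^N :=
      Int.emod_nonneg _ hspos.ne'
    have hr1 : (m + ((halfL ℓ (N+1):ℕ):ℤ)) % ((2*ℓ+1:ℕ):ℤ)^N < ((2*ℓ+1:ℕ):ℤ)^N :=
      Int.emod_lt_of_pos _ hspos
    have hkey : swapFun ℓ N π m + ((halfL ℓ (N+1):ℕ):ℤ)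
        = (m + ((halfL ℓ (N+1):ℕ):ℤ)) % ((2*ℓ+1:ℕ):ℤ)^N
          + ppFun ℓ π ((m + ((halfL ℓ (N+1):ℕ):ℤ))/((2*ℓ+1:ℕ):ℤ)^N) * ((2*ℓ+1:ℕ):ℤ)^N := by
      rw [swap_pos_eq ℓ N π m hm]; ring
    rw [hkey]
    constructor
    · rw [Int.add_mul_ediv_right _ _ hspos.ne', Int.ediv_eq_zero_of_lt hr0 hr1, zero_add]
    · rw [Int.add_mul_emod_self_right, Int.emod_eq_of_lt hr0 hr1]
  intro m1 m2 heq
  by_cases h1 : 0 ≤ m1 + ((halfL ℓ (N+1):ℕ):ℤ)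
      ∧ m1 + ((halfL ℓ (N+1):ℕ):ℤ) < ((2*ℓ+1:ℕ):ℤ)^(N+1) <;>
    by_cases h2 : 0 ≤ m2 + ((halfL ℓ (N+1):ℕ):ℤ)
      ∧ m2 + ((halfL ℓ (N+1):ℕ):ℤ) < ((2*ℓ+1:ℕ):ℤ)^(N+1)
  · obtain ⟨d1, r1⟩ := hqr m1 h1
    obtain ⟨d2, r2⟩ := hqr m2 h2
    rw [heq] at d1 r1
    have hq : (m1 + ((halfL ℓ (N+1):ℕ):ℤ))/((2*ℓ+1:ℕ):ℤ)^N
        = (m2 + ((halfL ℓ (N+1):ℕ):ℤ))/((2*ℓ+1:ℕ):ℤ)^N := pp_inj ℓ π (d1.symm.trans d2)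
    have hdm1 := Int.mul_ediv_add_emod (m1 + ((halfL ℓ (N+1):ℕ):ℤ)) (((2*ℓ+1:ℕ):ℤ)^N)
    have hdm2 := Int.mul_ediv_add_emod (m2 + ((halfL ℓ (N+1):ℕ):ℤ)) (((2*ℓ+1:ℕ):ℤ)^N)
    have heq2 : m1 + ((halfL ℓ (N+1):ℕ):ℤ) = m2 + ((halfL ℓ (N+1):ℕ):ℤ) := by
      rw [← hdm1, ← hdm2, hq, r1.symm.trans r2]
    omega
  · exfalso
    have e1 := swap_in_range ℓ N π m1 h1.1 h1.2
    rw [heq, swap_neg_eq ℓ N π m2 h2] at e1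
    exact h2 ⟨e1.1, e1.2⟩
  · exfalso
    have e2 := swap_in_range ℓ N π m2 h2.1 h2.2
    rw [← heq, swap_neg_eq ℓ N π m1 h1] at e2
    exact h1 ⟨e2.1, e2.2⟩
  · rwa [swap_neg_eq ℓ N π m1 h1, swap_neg_eq ℓ N π m2 h2] at heq

lemma ell_lt : ℓ < 2*ℓ+1 := by omega

lemma pp_center : ppFun ℓ π (0 + (ℓ:ℤ))
    = ((π ⟨ℓ, ell_lt ℓ⟩ : Fin (2*ℓ+1)) : ℕ) := by
  have h := pp_fin ℓ π ⟨ℓ, ell_lt ℓ⟩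
  simpa using h

/-- The swap moves the central sub-block completely off itself. -/
lemma swap_central (hπc : π ⟨ℓ, ell_lt ℓ⟩ ≠ ⟨ℓ, ell_lt ℓ⟩) (m : ℤ)
    (hm1 : -((halfL ℓ N : ℕ):ℤ) ≤ m) (hm2 : m ≤ ((halfL ℓ N : ℕ):ℤ)) :
    swapFun ℓ N π m < -((halfL ℓ N : ℕ):ℤ) ∨ ((halfL ℓ N : ℕ):ℤ) < swapFun ℓ N π m := by
  have hs : ((2*ℓ+1:ℕ):ℤ)^N = 2 * (halfL ℓ N : ℤ) + 1 := cast_pow_eq ℓ N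
  have hb := swap_block ℓ N π 0 m (by omega) (by omega) (by omega) (by omega)
  rw [hb, pp_center]
  have hval : ((π ⟨ℓ, ell_lt ℓ⟩ : Fin (2*ℓ+1)) : ℕ) ≠ ℓ := by
    intro hcon
    exact hπc (Fin.ext (by simpa using hcon))
  have hd : (((π ⟨ℓ, ell_lt ℓ⟩ : Fin (2*ℓ+1)) : ℕ) : ℤ) - (0 + (ℓ:ℤ)) ≠ 0 := by omega
  rcases lt_or_gt_of_ne hd with hneg | hpos
  · left
    have hstep : ((((π ⟨ℓ, ell_lt ℓ⟩ : Fin (2*ℓ+1)) : ℕ) : ℤ) - (0 + (ℓ:ℤ))) * ((2*ℓ+1:ℕ):ℤ)^N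
        ≤ -(((2*ℓ+1:ℕ):ℤ)^N) := by
      have := mul_le_mul_of_nonneg_right
        (show (((π ⟨ℓ, ell_lt ℓ⟩ : Fin (2*ℓ+1)) : ℕ) : ℤ) - (0 + (ℓ:ℤ)) ≤ -1 by omega)
        (show (0:ℤ) ≤ ((2*ℓ+1:ℕ):ℤ)^N by positivity)
      linarith
    omega
  · right
    have hstep : ((2*ℓ+1:ℕ):ℤ)^N
        ≤ ((((π ⟨ℓ, ell_lt ℓ⟩ : Fin (2*ℓ+1)) : ℕ) : ℤ) - (0 + (ℓ:ℤ))) * ((2*ℓ+1:ℕ):ℤ)^N := by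
      have := mul_le_mul_of_nonneg_right
        (show (1:ℤ) ≤ (((π ⟨ℓ, ell_lt ℓ⟩ : Fin (2*ℓ+1)) : ℕ) : ℤ) - (0 + (ℓ:ℤ)) by omega)
        (show (0:ℤ) ≤ ((2*ℓ+1:ℕ):ℤ)^N by positivity)
      linarith
    omega

end Swap

section Main

variable {ℓ : ℕ} {φ : (Fin (2*ℓ+1) → M) → M} {T : (ℤ → M) → (ℤ → M)}
  (hT : ∀ (a : ℤ → M) (k : ℤ),
      T a k = φ (fun i => a (((2 * ℓ + 1 : ℕ) : ℤ) * k - (ℓ : ℤ) + ((i : ℕ) : ℤ))))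
  (π : Equiv.Perm (Fin (2*ℓ+1)))
  (hπφ : ∀ a : Fin (2*ℓ+1) → M, φ (fun i => a (π i)) = φ a)

include hT hπφ

lemma iter_swap (N : ℕ) (a : ℤ → M) :
    T^[N+1] (fun m => a (swapFun ℓ N π m)) = T^[N+1] a := by
  funext k
  by_cases hk : k = 0
  · subst hk
    rw [Function.iterate_succ_apply', Function.iterate_succ_apply', hT, hT]
    have key : ∀ i : Fin (2*ℓ+1),
        T^[N] (fun m => a (swapFun ℓ N π m)) (((2*ℓ+1:ℕ):ℤ) * 0 - (ℓ:ℤ) + ((i:ℕ):ℤ))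
          = T^[N] a (((2*ℓ+1:ℕ):ℤ) * 0 - (ℓ:ℤ) + (((π i : Fin (2*ℓ+1)):ℕ):ℤ)) := by
      intro i
      set k : ℤ := ((2*ℓ+1:ℕ):ℤ) * 0 - (ℓ:ℤ) + ((i:ℕ):ℤ) with hk_def
      have hi := i.isLt
      have hπi := (π i).isLt
      have hkl : k + (ℓ:ℤ) = ((i:ℕ):ℤ) := by rw [hk_def]; push_cast; ring
      have hd : T^[N] (fun m => a (m + ((2*ℓ+1:ℕ):ℤ)^N * ((((π i):ℕ):ℤ) - ((i:ℕ):ℤ)))) k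
          = T^[N] a (k + ((((π i):ℕ):ℤ) - ((i:ℕ):ℤ))) :=
        shiftTiter_def hT N a _ k
      have hloc : T^[N] (fun m => a (swapFun ℓ N π m)) k
          = T^[N] (fun m => a (m + ((2*ℓ+1:ℕ):ℤ)^N * ((((π i):ℕ):ℤ) - ((i:ℕ):ℤ)))) k := by
        apply loc hT N
        intro m hm1 hm2
        have hb := swap_block ℓ N π k m (by omega) (by omega) hm1 hm2
        rw [hkl, pp_fin] at hb
        rw [hb]
        congr 1
        ring
      rw [hloc, hd]
      congr 1
      rw [hk_def]
      push_cast
      ring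
    calc φ (fun i => T^[N] (fun m => a (swapFun ℓ N π m))
            (((2*ℓ+1:ℕ):ℤ) * 0 - (ℓ:ℤ) + ((i:ℕ):ℤ)))
        = φ (fun i => (fun j : Fin (2*ℓ+1) =>
            T^[N] a (((2*ℓ+1:ℕ):ℤ) * 0 - (ℓ:ℤ) + ((j:ℕ):ℤ))) (π i)) := by
          congr 1
          funext i
          exact key i
      _ = φ (fun j => T^[N] a (((2*ℓ+1:ℕ):ℤ) * 0 - (ℓ:ℤ) + ((j:ℕ):ℤ))) := by
          exact hπφ (fun j => T^[N] a (((2*ℓ+1:ℕ):ℤ) * 0 - (ℓ:ℤ) + ((j:ℕ):ℤ)))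
  · apply loc hT (N+1)
    intro m hm1 hm2
    have houts : swapFun ℓ N π m = m := by
      apply swap_outside
      have hpow := cast_pow_eq ℓ (N+1)
      rcases lt_or_gt_of_ne hk with hneg | hpos
      · have : ((2*ℓ+1:ℕ):ℤ)^(N+1) * k ≤ -(((2*ℓ+1:ℕ):ℤ)^(N+1)) := by
          have := mul_le_mul_of_nonneg_left (show k ≤ -1 by omega)
            (show (0:ℤ) ≤ ((2*ℓ+1:ℕ):ℤ)^(N+1) by positivity)
          linarith
        omega
      · have : ((2*ℓ+1:ℕ):ℤ)^(N+1) ≤ ((2*ℓ+1:ℕ):ℤ)^(N+1) * k := by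
          have := mul_le_mul_of_nonneg_left (show (1:ℤ) ≤ k by omega)
            (show (0:ℤ) ≤ ((2*ℓ+1:ℕ):ℤ)^(N+1) by positivity)
          linarith
        omega
    rw [houts]

lemma trace_swap (N j : ℕ) (a : ℤ → M) :
    T^[j + (N+1)] (fun m => a (swapFun ℓ N π m)) 0 = T^[j + (N+1)] a 0 := by
  rw [Function.iterate_add_apply T j (N+1), Function.iterate_add_apply T j (N+1),
    iter_swap hT π hπφ N a]

end Main

section Prob

open MeasureTheory ProbabilityTheory

variable {Ω : Type*} [MeasurableSpace Ω] [MeasurableSpace M]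
  {Pr : Measure Ω} {X : ℤ → Ω → M}

lemma iIndep_reindex (hindep : iIndepFun X Pr)
    (ι : ℤ → ℤ) (hι : Function.Injective ι) :
    iIndepFun (fun k => X (ι k)) Pr := by
  rw [iIndepFun_iff_measure_inter_preimage_eq_mul] at hindep ⊢
  intro S sets hsets
  classical
  set sets' : ℤ → Set M := fun j => ⋂ k ∈ S.filter (fun k => ι k = j), sets k with hsets'_def
  have hsets'e : ∀ k₀ ∈ S, sets' (ι k₀) = sets k₀ := by
    intro k₀ hk₀
    have hfil : S.filter (fun k => ι k = ι k₀) = {k₀} := by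
      ext k
      simp only [Finset.mem_filter, Finset.mem_singleton]
      constructor
      · rintro ⟨-, h⟩; exact hι h
      · rintro rfl; exact ⟨hk₀, rfl⟩
    rw [hsets'_def]
    simp only
    rw [hfil, Finset.set_biInter_singleton]
  have hmeas' : ∀ j, j ∈ S.image ι → MeasurableSet (sets' j) := by
    intro j hj
    obtain ⟨k₀, hk₀, rfl⟩ := Finset.mem_image.mp hj
    rw [hsets'e k₀ hk₀]
    exact hsets k₀ hk₀
  have hIeq : (⋂ k ∈ S, (X (ι k))⁻¹' sets k) = ⋂ j ∈ S.image ι, X j ⁻¹' sets' j := by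
    ext ω
    simp only [Set.mem_iInter, Set.mem_preimage, Finset.mem_image]
    constructor
    · rintro h j ⟨k₀, hk₀, rfl⟩
      rw [hsets'e k₀ hk₀]
      exact h k₀ hk₀
    · intro h k hk
      have := h (ι k) ⟨k, hk, rfl⟩
      rwa [hsets'e k hk] at this
  rw [hIeq, hindep (S.image ι) hmeas',
    Finset.prod_image (fun x _ y _ h => hι h)]
  exact Finset.prod_congr rfl fun k hk => by rw [hsets'e k hk]

lemma law_map_eq [IsProbabilityMeasure Pr] (hmeas : ∀ k, Measurable (X k))
    (hindep : iIndepFun X Pr)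
    (hident : ∀ k k', Measure.map (X k) Pr = Measure.map (X k') Pr)
    (ι : ℤ → ℤ) (hι : Function.Injective ι) :
    Pr.map (fun ω (k : ℤ) => X (ι k) ω) = Pr.map (fun ω (k : ℤ) => X k ω) := by
  have hJ1 : Measurable (fun ω (k : ℤ) => X (ι k) ω) :=
    measurable_pi_lambda _ (fun k => hmeas (ι k))
  have hJ2 : Measurable (fun ω (k : ℤ) => X k ω) :=
    measurable_pi_lambda _ (fun k => hmeas k)
  have hrein := iIndep_reindex hindep ι hι
  have h1 : IsProbabilityMeasure (Pr.map (fun ω (k : ℤ) => X (ι k) ω)) :=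
    Measure.isProbabilityMeasure_map hJ1.aemeasurable
  have h2 : IsProbabilityMeasure (Pr.map (fun ω (k : ℤ) => X k ω)) :=
    Measure.isProbabilityMeasure_map hJ2.aemeasurable
  refine ext_of_generate_finite
    (squareCylinders (fun _ : ℤ => {s : Set M | MeasurableSet s}))
    generateFrom_squareCylinders.symm
    (isPiSystem_squareCylinders (fun _ s hs t ht _ => hs.inter ht)
      (fun _ => MeasurableSet.univ)) ?_ ?_
  · rintro - ⟨F, t, htC, rfl⟩
    have htm : ∀ i ∈ F, MeasurableSet (t i) := fun i _ => htC i (Set.mem_univ i)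
    have hPiMeas : MeasurableSet ((↑F : Set ℤ).pi t) :=
      MeasurableSet.pi F.countable_toSet (fun i hi => htm i hi)
    rw [Measure.map_apply hJ1 hPiMeas, Measure.map_apply hJ2 hPiMeas]
    have hpre1 : (fun ω (k : ℤ) => X (ι k) ω) ⁻¹' ((↑F : Set ℤ).pi t)
        = ⋂ k ∈ F, X (ι k) ⁻¹' t k := by
      ext ω; simp [Set.mem_pi]
    have hpre2 : (fun ω (k : ℤ) => X k ω) ⁻¹' ((↑F : Set ℤ).pi t)
        = ⋂ k ∈ F, X k ⁻¹' t k := by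
      ext ω; simp [Set.mem_pi]
    rw [hpre1, hpre2, hrein.measure_inter_preimage_eq_mul F htm,
      hindep.measure_inter_preimage_eq_mul F htm]
    refine Finset.prod_congr rfl fun k hk => ?_
    rw [← Measure.map_apply (hmeas (ι k)) (htm k hk), ← Measure.map_apply (hmeas k) (htm k hk),
      hident (ι k) k]
  · simp

end Prob

end RenormZeroOne

open RenormZeroOne ENNReal in
open scoped symmDiff in
/-- **Zero-one law for the trace of simple symmetric renormalization maps.** -/
theorem renormalization_trace_zero_one_law
    {Ω M : Type*} [MeasurableSpace Ω] [MeasurableSpace M]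
    (Pr : Measure Ω) [IsProbabilityMeasure Pr]
    (ℓ : ℕ) (φ : (Fin (2 * ℓ + 1) → M) → M) (hφ : Measurable φ)
    (T : (ℤ → M) → (ℤ → M))
    (hT : ∀ (a : ℤ → M) (k : ℤ),
      T a k = φ (fun i => a (((2 * ℓ + 1 : ℕ) : ℤ) * k - (ℓ : ℤ) + ((i : ℕ) : ℤ))))
    (π : Equiv.Perm (Fin (2 * ℓ + 1)))
    (hπφ : ∀ a : Fin (2 * ℓ + 1) → M, φ (fun i => a (π i)) = φ a)
    (hπc : π ⟨ℓ, by omega⟩ ≠ ⟨ℓ, by omega⟩)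
    (X : ℤ → Ω → M) (hmeas : ∀ k, Measurable (X k))
    (hindep : iIndepFun X Pr)
    (hident : ∀ k k', Measure.map (X k) Pr = Measure.map (X k') Pr)
    (E : Set (ℕ → M))
    (hE : ∀ n : ℕ, MeasurableSet[MeasurableSpace.comap
      (fun (a : ℕ → M) (k : ℕ) => a (k + n)) MeasurableSpace.pi] E) :
    Pr {ω | (fun n => T^[n] (fun k => X k ω) 0) ∈ E} = 0 ∨
      Pr {ω | (fun n => T^[n] (fun k => X k ω) 0) ∈ E} = 1 := by
  classical
  -- the degenerate case `ℓ = 0` contradicts `hπc`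
  rcases Nat.eq_zero_or_pos ℓ with hℓ0 | hℓpos
  · exfalso
    apply hπc
    subst hℓ0
    haveI : Subsingleton (Fin (2*0+1)) := Fin.subsingleton_one
    exact Subsingleton.elim _ _
  -- measurability of `T` and of the trace map
  have hTmeas : Measurable T := by
    apply measurable_pi_lambda
    intro k
    have : (fun a : ℤ → M => T a k)
        = fun a => φ (fun i => a (((2 * ℓ + 1 : ℕ) : ℤ) * k - (ℓ : ℤ) + ((i : ℕ) : ℤ))) := by
      funext a; exact hT a k
    rw [this]
    exact hφ.comp (measurable_pi_lambda _ (fun i => measurable_pi_apply _))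
  have hTn : ∀ n : ℕ, Measurable (T^[n]) := fun n => hTmeas.iterate n
  set τ : (ℤ → M) → (ℕ → M) := fun a n => T^[n] a 0 with hτ_def
  have hτ : Measurable τ :=
    measurable_pi_lambda _ (fun n => (measurable_pi_apply 0).comp (hTn n))
  -- `E` is measurable
  have hEmeas : MeasurableSet E := by
    obtain ⟨E₀, hE₀, hEeq⟩ := MeasurableSpace.measurableSet_comap.mp (hE 0)
    rw [← hEeq]
    exact (measurable_pi_lambda _ (fun k => measurable_pi_apply _)) hE₀
  set A : Set (ℤ → M) := τ ⁻¹' E with hA_def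
  have hA : MeasurableSet A := hτ hEmeas
  set J : Ω → (ℤ → M) := fun ω k => X k ω with hJ_def
  have hJ : Measurable J := measurable_pi_lambda _ (fun k => hmeas k)
  set μ : Measure (ℤ → M) := Pr.map J with hμ_def
  have hμprob : IsProbabilityMeasure μ := Measure.isProbabilityMeasure_map hJ.aemeasurable
  have hPrA : Pr {ω | (fun n => T^[n] (fun k => X k ω) 0) ∈ E} = μ A := by
    rw [hμ_def, Measure.map_apply hJ hA]
    rfl
  rw [hPrA]
  -- the swap maps and their properties
  have hΦmeas : ∀ N : ℕ, Measurable (fun (a : ℤ → M) m => a (swapFun ℓ N π m)) :=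
    fun N => measurable_pi_lambda _ (fun m => measurable_pi_apply _)
  -- invariance of `A` under the swaps
  have hAinv : ∀ N : ℕ, (fun (a : ℤ → M) m => a (swapFun ℓ N π m)) ⁻¹' A = A := by
    intro N
    obtain ⟨E', hE', hEeq⟩ := MeasurableSpace.measurableSet_comap.mp (hE (N+1))
    rw [hA_def, ← hEeq]
    ext a
    simp only [Set.mem_preimage]
    have hfun : (fun (k : ℕ) => τ (fun m => a (swapFun ℓ N π m)) (k + (N+1)))
        = fun (k : ℕ) => τ a (k + (N+1)) := by
      funext k
      exact trace_swap hT π hπφ N k a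
    constructor
    · intro h
      rwa [← hfun]
    · intro h
      rwa [hfun]
  -- the swaps preserve the law `μ`
  have hμΦ : ∀ N : ℕ, μ.map (fun (a : ℤ → M) m => a (swapFun ℓ N π m)) = μ := by
    intro N
    rw [hμ_def, Measure.map_map (hΦmeas N) hJ]
    exact law_map_eq hmeas hindep hident (swapFun ℓ N π) (swap_inj ℓ N π)
  have hμΦ_apply : ∀ (N : ℕ) (D : Set (ℤ → M)), MeasurableSet D →
      μ ((fun (a : ℤ → M) m => a (swapFun ℓ N π m)) ⁻¹' D) = μ D := by
    intro N D hD
    rw [← Measure.map_apply (hΦmeas N) hD, hμΦ N]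
  -- cylinders are measure-dense
  have halg : MeasureTheory.IsSetAlgebra (measurableCylinders (fun _ : ℤ => M)) :=
    ⟨empty_mem_measurableCylinders _, fun _ h => compl_mem_measurableCylinders h,
      fun _ _ h h' => union_mem_measurableCylinders h h'⟩
  have hdense : μ.MeasureDense (measurableCylinders (fun _ : ℤ => M)) :=
    Measure.MeasureDense.of_generateFrom_isSetAlgebra_finite μ halg
      generateFrom_measurableCylinders.symm
  -- half-widths grow at least linearly
  have hLgrow : ∀ n : ℕ, n ≤ halfL ℓ n := by
    intro n
    induction n with
    | zero => exact Nat.zero_le _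
    | succ n ih =>
      have h1 : halfL ℓ n ≤ (2*ℓ+1) * halfL ℓ n := Nat.le_mul_of_pos_left _ (by omega)
      have h2 : halfL ℓ (n+1) = (2*ℓ+1) * halfL ℓ n + ℓ := rfl
      omega
  -- main estimate
  have key : ∀ ε : ℝ, 0 < ε →
      μ A ≤ μ A * μ A + 5 * ENNReal.ofReal ε ∧
        μ A * μ A ≤ μ A + 5 * ENNReal.ofReal ε := by
    intro ε hε
    obtain ⟨C, hCmem, hCsd⟩ := hdense.approx A hA (measure_ne_top μ A) ε hε
    obtain ⟨F, S, hS, rfl⟩ := (mem_measurableCylinders C).mp hCmem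
    have hCmeas : MeasurableSet (cylinder F S : Set (ℤ → M)) := MeasurableSet.of_mem_measurableCylinders hCmem
    set N : ℕ := F.sup (fun k => k.natAbs) with hN_def
    have hFsub : ∀ k ∈ F, -((halfL ℓ N : ℕ):ℤ) ≤ k ∧ k ≤ ((halfL ℓ N : ℕ):ℤ) := by
      intro k hk
      have h1 : k.natAbs ≤ N := Finset.le_sup (f := fun k => k.natAbs) hk
      have h2 : N ≤ halfL ℓ N := hLgrow N
      omega
    set D : Set (ℤ → M) := (fun (a : ℤ → M) m => a (swapFun ℓ N π m)) ⁻¹' (cylinder F S)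
      with hD_def
    have hDmeas : MeasurableSet D := (hΦmeas N) hCmeas
    have hμD : μ D = μ (cylinder F S) := hμΦ_apply N _ hCmeas
    -- μ (A ∆ D) = μ (A ∆ C)
    have hsymm_pre : (fun (a : ℤ → M) m => a (swapFun ℓ N π m)) ⁻¹' (A ∆ cylinder F S)
        = A ∆ D := by
      have hgen : (fun (a : ℤ → M) m => a (swapFun ℓ N π m)) ⁻¹' (A ∆ cylinder F S)
          = ((fun (a : ℤ → M) m => a (swapFun ℓ N π m)) ⁻¹' A)
            ∆ ((fun (a : ℤ → M) m => a (swapFun ℓ N π m)) ⁻¹' (cylinder F S)) := by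
        ext z
        simp [Set.mem_symmDiff]
      rw [hgen, hAinv N, hD_def]
    have hAD : μ (A ∆ D) = μ (A ∆ cylinder F S) := by
      rw [← hsymm_pre]
      exact hμΦ_apply N _ (hA.symmDiff hCmeas)
    -- independence of C and D
    have hdisj : Disjoint F (F.image (swapFun ℓ N π)) := by
      rw [Finset.disjoint_left]
      intro k hk hkim
      obtain ⟨k', hk', hσk'⟩ := Finset.mem_image.mp hkim
      have h1 := hFsub k' hk'
      have h2 := hFsub k hk
      have h3 := swap_central ℓ N π hπc k' h1.1 h1.2
      rw [hσk'] at h3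
      omega
    have hindepCD : μ (cylinder F S ∩ D) = μ (cylinder F S) * μ D := by
      have hIF := ProbabilityTheory.iIndepFun.indepFun_finset F (F.image (swapFun ℓ N π))
        hdisj hindep hmeas
      set R : (∀ i : (F.image (swapFun ℓ N π) : Finset ℤ), M) → (∀ i : F, M) :=
        fun v i => v ⟨swapFun ℓ N π i, Finset.mem_image_of_mem (swapFun ℓ N π) i.2⟩ with hR_def
      have hR : Measurable R := measurable_pi_lambda _ (fun i => measurable_pi_apply _)
      have hIF2 := hIF.comp (measurable_id (α := ∀ i : F, M)) hR
      have hmul := (indepFun_iff_measure_inter_preimage_eq_mul.mp hIF2) S S hS hS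
      have hpre1 : J ⁻¹' (cylinder F S)
          = (id ∘ fun ω (i : F) => X (i : ℤ) ω) ⁻¹' S := rfl
      have hpre2 : J ⁻¹' D
          = (R ∘ fun ω (i : (F.image (swapFun ℓ N π) : Finset ℤ)) => X (i : ℤ) ω) ⁻¹' S := rfl
      have hpre3 : J ⁻¹' (cylinder F S ∩ D) = J ⁻¹' (cylinder F S) ∩ J ⁻¹' D := rfl
      rw [hμ_def, Measure.map_apply hJ (hCmeas.inter hDmeas),
        Measure.map_apply hJ hCmeas, Measure.map_apply hJ hDmeas,
        hpre3, hpre1, hpre2]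
      exact hmul
    -- arithmetic
    set x := μ A with hx_def
    set c := μ (cylinder F S) with hc_def
    set e := μ (A ∆ cylinder F S) with he_def
    have hx1 : x ≤ 1 := prob_le_one
    have hc1 : c ≤ 1 := prob_le_one
    have he1 : e ≤ 1 := prob_le_one
    have heε : e ≤ ENNReal.ofReal ε := hCsd.le
    have haux1 : ∀ s t : Set (ℤ → M), μ s ≤ μ t + μ (s ∆ t) := by
      intro s t
      refine (measure_mono ?_).trans (measure_union_le _ _)
      intro z hz
      by_cases hzt : z ∈ t
      · exact Or.inl hzt
      · exact Or.inr (Set.mem_symmDiff.mpr (Or.inl ⟨hz, hzt⟩))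
    have haux2 : ((A ∩ A) ∆ (cylinder F S ∩ D)) ⊆ (A ∆ cylinder F S) ∪ (A ∆ D) := by
      intro z hz
      simp only [Set.mem_symmDiff, Set.mem_inter_iff, Set.mem_union] at *
      tauto
    have hsd2 : μ ((A ∩ A) ∆ (cylinder F S ∩ D)) ≤ e + e := by
      refine (measure_mono haux2).trans ?_
      refine (measure_union_le _ _).trans ?_
      rw [hAD]
    have h1 : x ≤ c * c + (e + e) := by
      calc x = μ (A ∩ A) := by rw [Set.inter_self]
      _ ≤ μ (cylinder F S ∩ D) + μ ((A ∩ A) ∆ (cylinder F S ∩ D)) := haux1 _ _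
      _ ≤ μ (cylinder F S ∩ D) + (e + e) := add_le_add_right hsd2 _
      _ = c * c + (e + e) := by rw [hindepCD, hμD]
    have h2 : c * c ≤ x + (e + e) := by
      calc c * c = μ (cylinder F S ∩ D) := by rw [hindepCD, hμD]
      _ ≤ μ (A ∩ A) + μ ((cylinder F S ∩ D) ∆ (A ∩ A)) := haux1 _ _
      _ = μ (A ∩ A) + μ ((A ∩ A) ∆ (cylinder F S ∩ D)) := by rw [symmDiff_comm]
      _ ≤ x + (e + e) := add_le_add (le_of_eq (by rw [Set.inter_self])) hsd2
    have h3 : c ≤ x + e := by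
      calc c ≤ μ A + μ (cylinder F S ∆ A) := haux1 _ _
      _ = x + e := by rw [symmDiff_comm]
    have h4 : x ≤ c + e := haux1 _ _
    have hmul_le : ∀ y : ENNReal, y ≤ 1 → y * e ≤ e := by
      intro y hy
      calc y * e ≤ 1 * e := mul_le_mul_left hy e
      _ = e := one_mul e
    have h5 : x ≤ x * x + 5 * e := by
      have hcc : c * c ≤ (x + e) * (x + e) := mul_le_mul' h3 h3
      have hexp : (x + e) * (x + e) = x * x + (x * e + e * x + e * e) := by ring
      have hb1 : x * e ≤ e := hmul_le x hx1
      have hb2 : e * x ≤ e := by rw [mul_comm]; exact hmul_le x hx1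
      have hb3 : e * e ≤ e := hmul_le e he1
      calc x ≤ c * c + (e + e) := h1
      _ ≤ (x + e) * (x + e) + (e + e) := add_le_add_left hcc _
      _ = x * x + (x * e + e * x + e * e) + (e + e) := by rw [hexp]
      _ ≤ x * x + (e + e + e) + (e + e) := by
          refine add_le_add_left (add_le_add_right ?_ _) _
          exact add_le_add (add_le_add hb1 hb2) hb3
      _ = x * x + 5 * e := by ring
    have h6 : x * x ≤ x + 5 * e := by
      have hcc : x * x ≤ (c + e) * (c + e) := mul_le_mul' h4 h4
      have hexp : (c + e) * (c + e) = c * c + (c * e + e * c + e * e) := by ring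
      have hb1 : c * e ≤ e := hmul_le c hc1
      have hb2 : e * c ≤ e := by rw [mul_comm]; exact hmul_le c hc1
      have hb3 : e * e ≤ e := hmul_le e he1
      calc x * x ≤ (c + e) * (c + e) := hcc
      _ = c * c + (c * e + e * c + e * e) := hexp
      _ ≤ c * c + (e + e + e) := by
          refine add_le_add_right ?_ _
          exact add_le_add (add_le_add hb1 hb2) hb3
      _ ≤ (x + (e + e)) + (e + e + e) := add_le_add_left h2 _
      _ = x + 5 * e := by ring
    have h5e : 5 * e ≤ 5 * ENNReal.ofReal ε := mul_le_mul_right heε 5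
    exact ⟨h5.trans (add_le_add_right h5e _), h6.trans (add_le_add_right h5e _)⟩
  -- conclude `μ A = μ A * μ A`
  have hfin : ∀ ε' : NNReal, 0 < ε' → (5:ENNReal) * ENNReal.ofReal ((ε' : ℝ)/5) = (ε' : ENNReal) := by
    intro ε' hε'
    have harg : (5:ℝ) * ((ε' : ℝ)/5) = (ε' : ℝ) := by ring
    have h1 : ENNReal.ofReal ((ε' : ℝ)) = ENNReal.ofReal (5 * ((ε' : ℝ)/5)) := by
      rw [harg]
    rw [ENNReal.ofReal_mul (by norm_num : (0:ℝ) ≤ 5)] at h1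
    have h2 : ENNReal.ofReal (5:ℝ) = (5:ENNReal) := by
      simp
    rw [h2] at h1
    rw [← h1, ENNReal.ofReal_coe_nnreal]
  have hxx : μ A = μ A * μ A := by
    apply le_antisymm
    · apply ENNReal.le_of_forall_pos_le_add
      intro ε' hε' _
      have h := (key ((ε' : ℝ)/5) (by positivity)).1
      rwa [hfin ε' hε'] at h
    · apply ENNReal.le_of_forall_pos_le_add
      intro ε' hε' _
      have h := (key ((ε' : ℝ)/5) (by positivity)).2
      rwa [hfin ε' hε'] at h
  by_cases h0 : μ A = 0
  · exact Or.inl h0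
  · right
    have hne : μ A ≠ ∞ := measure_ne_top μ A
    have : μ A * 1 = μ A * μ A := by rw [mul_one]; exact hxx
    exact ((ENNReal.mul_right_inj h0 hne).mp this).symm
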